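/- Let d = 3 and let p ≥ q ≥ r > 0 with n = p + q + r. For all partitions λ of n, μ of p, ν of q, ζ of r, each with at most 3 rows and with μ, ν, ζ subpartitions of λ, the quantity Ξ(λ,μ,ν,ζ) = 2(n(p+q) - p² - pq - q²) - 2Σ(λ) + Σ(μ) + Σ(ν) + Σ(ζ) is at most 2n(2 + p + q) - 2(p² + q + q² + p(2 + q)). -/
import Mathlib

private lemma half_mul' (a : ℤ) : 2 * (a * (a - 1) / 2) = a * (a - 1) := by
  obtain ⟨k, hk⟩ := Int.even_mul_succ_self (a - 1)
  have h : a * (a - 1) = 2 * k := by linarith [hk]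
  omega

private lemma int_step (x : ℤ) : 0 ≤ x * (x - 1) := by
  rcases le_or_gt x 0 with h | h
  · have := mul_nonneg (by omega : (0:ℤ) ≤ -x) (by omega : (0:ℤ) ≤ 1 - x)
    nlinarith
  · exact mul_nonneg (by omega) (by omega)

set_option maxHeartbeats 2000000 in
private theorem core (l1 l2 l3 m1 m2 m3 n1 n2 n3 z1 z2 z3 : ℤ)
    (hm0 : 0 ≤ m3) (hn0 : 0 ≤ n3) (hz0 : 0 ≤ z3)
    (hr : 1 ≤ z1 + z2 + z3) (hqr : z1 + z2 + z3 ≤ n1 + n2 + n3)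
    (hpq : n1 + n2 + n3 ≤ m1 + m2 + m3)
    (hl1 : l3 ≤ l2) (hl2 : l2 ≤ l1)
    (hE : l1 + l2 + l3 = m1 + m2 + m3 + (n1 + n2 + n3) + (z1 + z2 + z3))
    (hm1 : m3 ≤ m2) (hm2 : m2 ≤ m1)
    (hn1 : n3 ≤ n2) (hn2 : n2 ≤ n1)
    (hz1 : z3 ≤ z2) (hz2 : z2 ≤ z1)
    (ha1 : m1 ≤ l1) (ha2 : m2 ≤ l2) (ha3 : m3 ≤ l3)
    (hb1 : n1 ≤ l1) (hb2 : n2 ≤ l2) (hb3 : n3 ≤ l3)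
    (hc1 : z1 ≤ l1) (hc2 : z2 ≤ l2) (hc3 : z3 ≤ l3) :
    (m1*(m1-1) + m2*(m2-1) - 2*m2 + m3*(m3-1) - 4*m3)
    + (n1*(n1-1) + n2*(n2-1) - 2*n2 + n3*(n3-1) - 4*n3)
    + (z1*(z1-1) + z2*(z2-1) - 2*z2 + z3*(z3-1) - 4*z3)
    ≤ 2*(l1*(l1-1) + l2*(l2-1) - 2*l2 + l3*(l3-1) - 4*l3)
      + 4*(n1+n2+n3) + 8*(z1+z2+z3) := by
  have hE0 : l1 + l2 + l3 - (m1 + m2 + m3 + (n1 + n2 + n3) + (z1 + z2 + z3)) = 0 := by omega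
  linarith [
    mul_eq_zero_of_left hE0 l1, mul_eq_zero_of_left hE0 l2, mul_eq_zero_of_left hE0 l3,
    mul_eq_zero_of_left hE0 m1, mul_eq_zero_of_left hE0 m2, mul_eq_zero_of_left hE0 m3,
    mul_eq_zero_of_left hE0 n1, mul_eq_zero_of_left hE0 n2, mul_eq_zero_of_left hE0 n3,
    mul_eq_zero_of_left hE0 z1, mul_eq_zero_of_left hE0 z2, mul_eq_zero_of_left hE0 z3,
    int_step (l1 - l2),
    int_step (l1 - z1),
    int_step (l2 - n2 - 1),
    int_step (l2 - z2 - 1),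
    int_step (l3 - n3 - 1),
    int_step (l3 - z3 - 1),
    int_step (z1 - z2 - 1),
    mul_nonneg (by omega : (0:ℤ) ≤ l1 + l2 + l3 - 3*z1 - 3*z2 - 3*z3) (by omega : (0:ℤ) ≤ l1 + l2 + l3 - m1 - m2 - m3 - 2*z1 - 2*z2 - 2*z3),
    mul_nonneg (by omega : (0:ℤ) ≤ l1 - l2) (by omega : (0:ℤ) ≤ l1 - l2),
    mul_nonneg (by omega : (0:ℤ) ≤ l1 - l2) (by omega : (0:ℤ) ≤ m1 + m2 + m3 - n1 - n2 - n3),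
    mul_nonneg (by omega : (0:ℤ) ≤ l1 - m1) (by omega : (0:ℤ) ≤ l1 - n1),
    mul_nonneg (by omega : (0:ℤ) ≤ l1 - m1) (by omega : (0:ℤ) ≤ l1 - z1),
    mul_nonneg (by omega : (0:ℤ) ≤ l1 - n1) (by omega : (0:ℤ) ≤ n1 + n2 + n3 - z1 - z2 - z3),
    mul_nonneg (by omega : (0:ℤ) ≤ l1 - z1) (by omega : (0:ℤ) ≤ z1 + z2 + z3 - 1),
    mul_nonneg (by omega : (0:ℤ) ≤ l2 - l3) (by omega : (0:ℤ) ≤ l1 + l2 + l3 - 2*n1 - 2*n2 - 2*n3 - z1 - z2 - z3),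
    mul_nonneg (by omega : (0:ℤ) ≤ l2 - l3) (by omega : (0:ℤ) ≤ l1 + l2 + l3 - 3*z1 - 3*z2 - 3*z3),
    mul_nonneg (by omega : (0:ℤ) ≤ l2 - l3) (by omega : (0:ℤ) ≤ l1 - l2),
    mul_nonneg (by omega : (0:ℤ) ≤ l2 - l3) (by omega : (0:ℤ) ≤ l1 - m1),
    mul_nonneg (by omega : (0:ℤ) ≤ l2 - l3) (by omega : (0:ℤ) ≤ l2 - m2),
    mul_nonneg (by omega : (0:ℤ) ≤ l2 - l3) (by omega : (0:ℤ) ≤ l3 - z3),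
    mul_nonneg (by omega : (0:ℤ) ≤ l2 - l3) (by omega : (0:ℤ) ≤ z1 + z2 + z3 - 1),
    mul_nonneg (by omega : (0:ℤ) ≤ l2 - m2) (by omega : (0:ℤ) ≤ l1 - n1),
    mul_nonneg (by omega : (0:ℤ) ≤ l3 - m3) (by omega : (0:ℤ) ≤ z2),
    mul_nonneg (by omega : (0:ℤ) ≤ m1 + m2 + m3 - n1 - n2 - n3) (by omega : (0:ℤ) ≤ l1 + l2 + l3 - m1 - m2 - m3 - 2*z1 - 2*z2 - 2*z3),
    mul_nonneg (by omega : (0:ℤ) ≤ m1 - m2) (by omega : (0:ℤ) ≤ l1 + l2 + l3 - 2*n1 - 2*n2 - 2*n3 - z1 - z2 - z3),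
    mul_nonneg (by omega : (0:ℤ) ≤ m1 - m2) (by omega : (0:ℤ) ≤ l1 - m1),
    mul_nonneg (by omega : (0:ℤ) ≤ m1 - m2) (by omega : (0:ℤ) ≤ z2 - z3),
    mul_nonneg (by omega : (0:ℤ) ≤ m1 - m2) (by omega : (0:ℤ) ≤ z3),
    mul_nonneg (by omega : (0:ℤ) ≤ m2 - m3) (by omega : (0:ℤ) ≤ l1 - l2),
    mul_nonneg (by omega : (0:ℤ) ≤ m2 - m3) (by omega : (0:ℤ) ≤ l2 - l3),
    mul_nonneg (by omega : (0:ℤ) ≤ m2 - m3) (by omega : (0:ℤ) ≤ m1 - m2),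
    mul_nonneg (by omega : (0:ℤ) ≤ m2 - m3) (by omega : (0:ℤ) ≤ n1 + n2 + n3 - z1 - z2 - z3),
    mul_nonneg (by omega : (0:ℤ) ≤ m2 - m3) (by omega : (0:ℤ) ≤ z1 + z2 + z3 - 1),
    mul_nonneg (by omega : (0:ℤ) ≤ m3) (by omega : (0:ℤ) ≤ l2 - l3),
    mul_nonneg (by omega : (0:ℤ) ≤ m3) (by omega : (0:ℤ) ≤ m1 + m2 + m3 - n1 - n2 - n3),
    mul_nonneg (by omega : (0:ℤ) ≤ m3) (by omega : (0:ℤ) ≤ m1 - m2),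
    mul_nonneg (by omega : (0:ℤ) ≤ m3) (by omega : (0:ℤ) ≤ m2 - m3),
    mul_nonneg (by omega : (0:ℤ) ≤ m3) (by omega : (0:ℤ) ≤ n1 - n2),
    mul_nonneg (by omega : (0:ℤ) ≤ m3) (by omega : (0:ℤ) ≤ n2 - n3),
    mul_nonneg (by omega : (0:ℤ) ≤ m3) (by omega : (0:ℤ) ≤ z1 - z2),
    mul_nonneg (by omega : (0:ℤ) ≤ m3) (by omega : (0:ℤ) ≤ z2 - z3),
    mul_nonneg (by omega : (0:ℤ) ≤ m3) (by omega : (0:ℤ) ≤ z3),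
    mul_nonneg (by omega : (0:ℤ) ≤ n1 + n2 + n3 - z1 - z2 - z3) (by omega : (0:ℤ) ≤ n1 + n2 + n3 - z1 - z2 - z3),
    mul_nonneg (by omega : (0:ℤ) ≤ n1 - n2) (by omega : (0:ℤ) ≤ l1 - l2),
    mul_nonneg (by omega : (0:ℤ) ≤ n1 - n2) (by omega : (0:ℤ) ≤ l2 - l3),
    mul_nonneg (by omega : (0:ℤ) ≤ n1 - n2) (by omega : (0:ℤ) ≤ z3),
    mul_nonneg (by omega : (0:ℤ) ≤ n2 - n3) (by omega : (0:ℤ) ≤ l1 + l2 + l3 - 2*n1 - 2*n2 - 2*n3 - z1 - z2 - z3),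
    mul_nonneg (by omega : (0:ℤ) ≤ n2 - n3) (by omega : (0:ℤ) ≤ l1 + l2 + l3 - 3*z1 - 3*z2 - 3*z3),
    mul_nonneg (by omega : (0:ℤ) ≤ n2 - n3) (by omega : (0:ℤ) ≤ l1 - m1),
    mul_nonneg (by omega : (0:ℤ) ≤ n2 - n3) (by omega : (0:ℤ) ≤ l2 - l3),
    mul_nonneg (by omega : (0:ℤ) ≤ n2 - n3) (by omega : (0:ℤ) ≤ l2 - m2),
    mul_nonneg (by omega : (0:ℤ) ≤ n2 - n3) (by omega : (0:ℤ) ≤ n1 - n2),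
    mul_nonneg (by omega : (0:ℤ) ≤ n2 - n3) (by omega : (0:ℤ) ≤ n2 - n3),
    mul_nonneg (by omega : (0:ℤ) ≤ n2 - n3) (by omega : (0:ℤ) ≤ z3),
    mul_nonneg (by omega : (0:ℤ) ≤ n3) (by omega : (0:ℤ) ≤ l1 + l2 + l3 - m1 - m2 - m3 - 2*z1 - 2*z2 - 2*z3),
    mul_nonneg (by omega : (0:ℤ) ≤ n3) (by omega : (0:ℤ) ≤ l1 - z1),
    mul_nonneg (by omega : (0:ℤ) ≤ n3) (by omega : (0:ℤ) ≤ l2 - z2),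
    mul_nonneg (by omega : (0:ℤ) ≤ n3) (by omega : (0:ℤ) ≤ l3 - n3),
    mul_nonneg (by omega : (0:ℤ) ≤ n3) (by omega : (0:ℤ) ≤ n1 + n2 + n3 - z1 - z2 - z3),
    mul_nonneg (by omega : (0:ℤ) ≤ n3) (by omega : (0:ℤ) ≤ n1 - n2),
    mul_nonneg (by omega : (0:ℤ) ≤ z1 + z2 + z3 - 1) (by omega : (0:ℤ) ≤ l1 + l2 + l3 - 2*n1 - 2*n2 - 2*n3 - z1 - z2 - z3),
    mul_nonneg (by omega : (0:ℤ) ≤ z1 + z2 + z3 - 1) (by omega : (0:ℤ) ≤ l1 + l2 + l3 - 3*z1 - 3*z2 - 3*z3),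
    mul_nonneg (by omega : (0:ℤ) ≤ z1 - z2) (by omega : (0:ℤ) ≤ l1 + l2 + l3 - m1 - m2 - m3 - 2*z1 - 2*z2 - 2*z3),
    mul_nonneg (by omega : (0:ℤ) ≤ z1 - z2) (by omega : (0:ℤ) ≤ l1 - l2),
    mul_nonneg (by omega : (0:ℤ) ≤ z1 - z2) (by omega : (0:ℤ) ≤ n1 + n2 + n3 - z1 - z2 - z3),
    mul_nonneg (by omega : (0:ℤ) ≤ z2 - z3) (by omega : (0:ℤ) ≤ l1 + l2 + l3 - 3*z1 - 3*z2 - 3*z3),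
    mul_nonneg (by omega : (0:ℤ) ≤ z2 - z3) (by omega : (0:ℤ) ≤ l2 - m2),
    mul_nonneg (by omega : (0:ℤ) ≤ z2 - z3) (by omega : (0:ℤ) ≤ m1 + m2 + m3 - n1 - n2 - n3),
    mul_nonneg (by omega : (0:ℤ) ≤ z2 - z3) (by omega : (0:ℤ) ≤ n1 + n2 + n3 - z1 - z2 - z3),
    mul_nonneg (by omega : (0:ℤ) ≤ z2 - z3) (by omega : (0:ℤ) ≤ z1 + z2 + z3 - 1),
    mul_nonneg (by omega : (0:ℤ) ≤ z2 - z3) (by omega : (0:ℤ) ≤ z1 - z2),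
    mul_nonneg (by omega : (0:ℤ) ≤ z3) (by omega : (0:ℤ) ≤ l2 - l3),
    mul_nonneg (by omega : (0:ℤ) ≤ z3) (by omega : (0:ℤ) ≤ l3 - m3),
    mul_nonneg (by omega : (0:ℤ) ≤ z3) (by omega : (0:ℤ) ≤ z1 - z2),
    mul_nonneg (by omega : (0:ℤ) ≤ z3) (by omega : (0:ℤ) ≤ z2 - z3)]

/-- Content sum of a three-row partition `(a, b, c)` with `a ≥ b ≥ c ≥ 0`. -/
def S3 (a b c : ℕ) : ℤ :=
  (a : ℤ) * ((a : ℤ) - 1) / 2 + ((b : ℤ) * ((b : ℤ) - 1) / 2 - (b : ℤ))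
    + ((c : ℤ) * ((c : ℤ) - 1) / 2 - 2 * (c : ℤ))

private lemma S3_double' (a b c : ℕ) : 2 * S3 a b c =
    (a:ℤ) * (a - 1) + ((b:ℤ) * (b - 1) - 2 * b) + ((c:ℤ) * (c - 1) - 4 * c) := by
  unfold S3
  have ha := half_mul' (a:ℤ)
  have hb := half_mul' (b:ℤ)
  have hc := half_mul' (c:ℤ)
  linarith

set_option maxHeartbeats 1000000 in
/-- For `p ≥ q ≥ r > 0`, `n = p + q + r`: over all partitions with at most 3 rows,
`λ ⊢ n`, `μ ⊢ p`, `ν ⊢ q`, `ζ ⊢ r` with `μ,ν,ζ` subpartitions of `λ`,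
`Ξ(λ,μ,ν,ζ) ≤ 2n(2+p+q) - 2(p² + q + q² + p(2+q))`. -/
theorem Xi_max_d3 (p q r : ℕ) (hr : 0 < r) (hqr : r ≤ q) (hpq : q ≤ p)
    (l1 l2 l3 m1 m2 m3 n1 n2 n3 z1 z2 z3 : ℕ)
    (hl : l3 ≤ l2 ∧ l2 ≤ l1) (hlsum : l1 + l2 + l3 = p + q + r)
    (hm : m3 ≤ m2 ∧ m2 ≤ m1) (hmsum : m1 + m2 + m3 = p)
    (hn : n3 ≤ n2 ∧ n2 ≤ n1) (hnsum : n1 + n2 + n3 = q)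
    (hz : z3 ≤ z2 ∧ z2 ≤ z1) (hzsum : z1 + z2 + z3 = r)
    (hmsub : m1 ≤ l1 ∧ m2 ≤ l2 ∧ m3 ≤ l3)
    (hnsub : n1 ≤ l1 ∧ n2 ≤ l2 ∧ n3 ≤ l3)
    (hzsub : z1 ≤ l1 ∧ z2 ≤ l2 ∧ z3 ≤ l3) :
    2 * (((p + q + r : ℕ) : ℤ) * ((p : ℤ) + q) - (p : ℤ) ^ 2 - (p : ℤ) * q - (q : ℤ) ^ 2)
        - 2 * S3 l1 l2 l3 + S3 m1 m2 m3 + S3 n1 n2 n3 + S3 z1 z2 z3 ≤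
      2 * ((p + q + r : ℕ) : ℤ) * (2 + (p : ℤ) + q)
        - 2 * ((p : ℤ) ^ 2 + q + (q : ℤ) ^ 2 + (p : ℤ) * (2 + q)) := by
  obtain ⟨hl3, hl2⟩ := hl
  obtain ⟨hm3, hm2⟩ := hm
  obtain ⟨hn3, hn2⟩ := hn
  obtain ⟨hz3, hz2⟩ := hz
  obtain ⟨ha1, ha2, ha3⟩ := hmsub
  obtain ⟨hb1, hb2, hb3⟩ := hnsub
  obtain ⟨hc1, hc2, hc3⟩ := hzsub
  have hcore := core (l1:ℤ) l2 l3 m1 m2 m3 n1 n2 n3 z1 z2 z3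
    (by exact_mod_cast Nat.zero_le m3) (by exact_mod_cast Nat.zero_le n3)
    (by exact_mod_cast Nat.zero_le z3)
    (by exact_mod_cast (by omega : (1:ℕ) ≤ z1 + z2 + z3))
    (by exact_mod_cast (by omega : z1 + z2 + z3 ≤ n1 + n2 + n3))
    (by exact_mod_cast (by omega : n1 + n2 + n3 ≤ m1 + m2 + m3))
    (by exact_mod_cast hl3) (by exact_mod_cast hl2)
    (by exact_mod_cast (by omega : l1 + l2 + l3 = m1 + m2 + m3 + (n1 + n2 + n3) + (z1 + z2 + z3)))
    (by exact_mod_cast hm3) (by exact_mod_cast hm2)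
    (by exact_mod_cast hn3) (by exact_mod_cast hn2)
    (by exact_mod_cast hz3) (by exact_mod_cast hz2)
    (by exact_mod_cast ha1) (by exact_mod_cast ha2) (by exact_mod_cast ha3)
    (by exact_mod_cast hb1) (by exact_mod_cast hb2) (by exact_mod_cast hb3)
    (by exact_mod_cast hc1) (by exact_mod_cast hc2) (by exact_mod_cast hc3)
  have eL := S3_double' l1 l2 l3
  have eM := S3_double' m1 m2 m3
  have eN := S3_double' n1 n2 n3
  have eZ := S3_double' z1 z2 z3
  have hq : (q:ℤ) = (n1:ℤ) + n2 + n3 := by exact_mod_cast hnsum.symm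
  have hrr : (r:ℤ) = (z1:ℤ) + z2 + z3 := by exact_mod_cast hzsum.symm
  have hp : (p:ℤ) = (m1:ℤ) + m2 + m3 := by exact_mod_cast hmsum.symm
  push_cast
  rw [hp, hq, hrr]
  linarith [hcore, eL, eM, eN, eZ]
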